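/- Let A ∈ ℝ^{n×n} be nonsingular. Then the relative distance from A to the set of singular matrices equals the reciprocal of its condition number: inf{ ‖A − B‖₂ / ‖A‖₂ : B ∈ ℝ^{n×n}, det(B) = 0 } = 1 / cond₂(A), where cond₂(A) = ‖A‖₂ ‖A⁻¹‖₂; equivalently, the distance from A to the nearest singular matrix in the spectral norm equals the smallest singular value σ_n of A, and this distance is attained. -/

import Mathlib

open Matrix

/-- The Euclidean (2-)norm on `ℝ^n`. -/
noncomputable def enorm {n : ℕ} (v : Fin n → ℝ) : ℝ := Real.sqrt (∑ i, (v i) ^ 2)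

/-- The spectral norm `‖A‖₂ = max_{‖x‖₂ = 1} ‖Ax‖₂` of a real matrix. -/
noncomputable def matSpectralNorm {m n : ℕ} (A : Matrix (Fin m) (Fin n) ℝ) : ℝ :=
  sSup {r : ℝ | ∃ x : Fin n → ℝ, _root_.enorm x = 1 ∧ r = _root_.enorm (A.mulVec x)}

lemma enorm_nonneg {n : ℕ} (v : Fin n → ℝ) : 0 ≤ _root_.enorm v := Real.sqrt_nonneg _

lemma enorm_sq {n : ℕ} (v : Fin n → ℝ) : _root_.enorm v ^ 2 = ∑ i, (v i) ^ 2 :=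
  Real.sq_sqrt (Finset.sum_nonneg fun i _ => sq_nonneg _)

lemma enorm_smul' {n : ℕ} (c : ℝ) (v : Fin n → ℝ) : _root_.enorm (c • v) = |c| * _root_.enorm v := by
  unfold _root_.enorm
  rw [← Real.sqrt_sq_eq_abs, ← Real.sqrt_mul (sq_nonneg c), Finset.mul_sum]
  congr 1
  exact Finset.sum_congr rfl fun i _ => by simp [mul_pow]

lemma rEnorm_pos {n : ℕ} {v : Fin n → ℝ} (hv : v ≠ 0) : 0 < _root_.enorm v := by
  obtain ⟨i, hi⟩ := Function.ne_iff.mp hv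
  exact Real.sqrt_pos.mpr (Finset.sum_pos' (fun j _ => sq_nonneg _)
    ⟨i, Finset.mem_univ i, pow_two_pos_of_ne_zero hi⟩)

lemma enorm_single {n : ℕ} (k : Fin n) {c : ℝ} (hc : 0 ≤ c) :
    _root_.enorm (Pi.single k c) = c := by
  unfold _root_.enorm
  rw [show ∑ i, (Pi.single k c : Fin n → ℝ) i ^ 2 = c ^ 2 by
    rw [Finset.sum_eq_single k]
    · simp
    · intro j _ hj; simp [Pi.single_apply, hj]
    · simp]
  exact Real.sqrt_sq hc

lemma enorm_mulVec_orth {n : ℕ} {U : Matrix (Fin n) (Fin n) ℝ} (hU : Uᵀ * U = 1)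
    (x : Fin n → ℝ) : _root_.enorm (U.mulVec x) = _root_.enorm x := by
  unfold _root_.enorm
  congr 1
  have key : ∀ w : Fin n → ℝ, ∑ i, w i ^ 2 = w ⬝ᵥ w := fun w => by
    simp [dotProduct, sq]
  rw [key, key, Matrix.dotProduct_mulVec, ← Matrix.mulVec_transpose,
    Matrix.mulVec_mulVec, hU, Matrix.one_mulVec]

lemma enorm_unit {n : ℕ} (hn : 0 < n) : _root_.enorm (Pi.single (⟨0, hn⟩ : Fin n) (1:ℝ)) = 1 :=
  enorm_single _ zero_le_one

lemma normSet_nonempty {n m : ℕ} (hn : 0 < n) (M : Matrix (Fin m) (Fin n) ℝ) :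
    {r : ℝ | ∃ x : Fin n → ℝ, _root_.enorm x = 1 ∧ r = _root_.enorm (M.mulVec x)}.Nonempty :=
  ⟨_, ⟨Pi.single ⟨0, hn⟩ 1, enorm_unit hn, rfl⟩⟩

lemma normSet_bddAbove {n m : ℕ} (M : Matrix (Fin m) (Fin n) ℝ) :
    BddAbove {r : ℝ | ∃ x : Fin n → ℝ, _root_.enorm x = 1 ∧ r = _root_.enorm (M.mulVec x)} := by
  refine ⟨Real.sqrt (∑ i, ∑ j, M i j ^ 2), ?_⟩
  rintro r ⟨x, hx, rfl⟩
  unfold _root_.enorm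
  apply Real.sqrt_le_sqrt
  have : ∀ i, (M.mulVec x i) ^ 2 ≤ ∑ j, M i j ^ 2 := by
    intro i
    have hmv : (M.mulVec x) i = ∑ j, M i j * x j := rfl
    calc (M.mulVec x i) ^ 2 ≤ (∑ j, M i j ^ 2) * ∑ j, x j ^ 2 := by
          rw [hmv]; exact Finset.sum_mul_sq_le_sq_mul_sq _ _ _
      _ = ∑ j, M i j ^ 2 := by
          rw [show ∑ j, x j ^ 2 = 1 from by
            have := enorm_sq x; rw [hx] at this; simpa using this.symm, mul_one]
  exact Finset.sum_le_sum fun i _ => this i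

lemma le_spectralNorm {n m : ℕ} (M : Matrix (Fin m) (Fin n) ℝ) {x : Fin n → ℝ}
    (hx : _root_.enorm x = 1) : _root_.enorm (M.mulVec x) ≤ matSpectralNorm M :=
  le_csSup (normSet_bddAbove M) ⟨x, hx, rfl⟩

lemma spectralNorm_le {n m : ℕ} (hn : 0 < n) (M : Matrix (Fin m) (Fin n) ℝ) {c : ℝ}
    (h : ∀ x : Fin n → ℝ, _root_.enorm x = 1 → _root_.enorm (M.mulVec x) ≤ c) : matSpectralNorm M ≤ c :=
  csSup_le (normSet_nonempty hn M) (by rintro r ⟨x, hx, rfl⟩; exact h x hx)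

lemma spectralNorm_conj {n : ℕ} (U M V : Matrix (Fin n) (Fin n) ℝ)
    (hU : Uᵀ * U = 1) (hV : Vᵀ * V = 1) :
    matSpectralNorm (U * M * Vᵀ) = matSpectralNorm M := by
  have hV' : V * Vᵀ = 1 := mul_eq_one_comm.mp hV
  have hVt : (Vᵀ)ᵀ * Vᵀ = 1 := by rwa [Matrix.transpose_transpose]
  unfold matSpectralNorm
  congr 1
  ext r
  constructor
  · rintro ⟨x, hx, rfl⟩
    refine ⟨Vᵀ.mulVec x, by rw [enorm_mulVec_orth hVt, hx], ?_⟩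
    rw [Matrix.mul_assoc, ← Matrix.mulVec_mulVec, enorm_mulVec_orth hU, ← Matrix.mulVec_mulVec]
  · rintro ⟨y, hy, rfl⟩
    refine ⟨V.mulVec y, by rw [enorm_mulVec_orth hV, hy], ?_⟩
    have : (U * M * Vᵀ).mulVec (V.mulVec y) = U.mulVec (M.mulVec y) := by
      rw [Matrix.mulVec_mulVec, Matrix.mul_assoc (U*M) Vᵀ V, hV, Matrix.mul_one,
        ← Matrix.mulVec_mulVec]
    rw [this, enorm_mulVec_orth hU]

lemma spectralNorm_diagonal {n : ℕ} (hn : 0 < n) (d : Fin n → ℝ) (hd : ∀ i, 0 ≤ d i)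
    (k : Fin n) (hk : ∀ i, d i ≤ d k) : matSpectralNorm (Matrix.diagonal d) = d k := by
  apply le_antisymm
  · apply spectralNorm_le hn
    intro x hx
    unfold _root_.enorm
    rw [show d k = Real.sqrt (d k ^ 2) from (Real.sqrt_sq (hd k)).symm]
    apply Real.sqrt_le_sqrt
    calc ∑ i, ((Matrix.diagonal d).mulVec x i) ^ 2 = ∑ i, (d i)^2 * (x i)^2 := by
          simp [Matrix.mulVec_diagonal, mul_pow]
      _ ≤ ∑ i, (d k)^2 * (x i)^2 := Finset.sum_le_sum fun i _ =>
          mul_le_mul_of_nonneg_right (pow_le_pow_left₀ (hd i) (hk i) 2) (sq_nonneg _)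
      _ = (d k)^2 := by
          rw [← Finset.mul_sum, show ∑ j, x j ^ 2 = 1 from by
            have := enorm_sq x; rw [hx] at this; simpa using this.symm, mul_one]
  · have h1 : _root_.enorm ((Matrix.diagonal d).mulVec (Pi.single k 1)) = d k := by
      have : (Matrix.diagonal d).mulVec (Pi.single k 1) = Pi.single k (d k) := by
        funext i
        rw [Matrix.mulVec_diagonal]
        by_cases h : i = k
        · subst h; simp
        · simp [Pi.single_apply, h]
      rw [this, enorm_single k (hd k)]
    rw [← h1]
    exact le_spectralNorm _ (enorm_single k zero_le_one)

/-- `IsRSVD A U S V` says that `A = U Σ Vᵀ` is a singular value decomposition of the real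
matrix `A`: `U`, `V` are orthogonal and `S` is diagonal with nonincreasing nonnegative
diagonal entries. -/
def IsRSVD {m n : ℕ} (A : Matrix (Fin m) (Fin n) ℝ) (U : Matrix (Fin m) (Fin m) ℝ)
    (S : Matrix (Fin m) (Fin n) ℝ) (V : Matrix (Fin n) (Fin n) ℝ) : Prop :=
  Uᵀ * U = 1 ∧ Vᵀ * V = 1 ∧
  (∀ (i : Fin m) (j : Fin n), (i : ℕ) ≠ (j : ℕ) → S i j = 0) ∧
  (∀ (i : Fin m) (j : Fin n), 0 ≤ S i j) ∧
  (∀ (i i' : Fin m) (j j' : Fin n), (i : ℕ) = (j : ℕ) → (i' : ℕ) = (j' : ℕ) →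
    (i : ℕ) ≤ (i' : ℕ) → S i' j' ≤ S i j) ∧
  A = U * S * Vᵀ

/-- For a nonsingular `A ∈ ℝ^{n×n}`, the relative distance to the nearest singular
matrix equals `1 / cond₂(A)` where `cond₂(A) = ‖A‖₂‖A⁻¹‖₂`; equivalently, the distance
to the nearest singular matrix equals the smallest singular value `σ_n`, and this
distance is attained. -/
theorem distance_to_singular_matrices {n : ℕ} (hn : 0 < n)
    (A : Matrix (Fin n) (Fin n) ℝ) (hA : IsUnit A.det)
    (U S V : Matrix (Fin n) (Fin n) ℝ) (hsvd : IsRSVD A U S V) :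
    sInf {r : ℝ | ∃ B : Matrix (Fin n) (Fin n) ℝ, B.det = 0 ∧
        r = matSpectralNorm (A - B) / matSpectralNorm A} =
      1 / (matSpectralNorm A * matSpectralNorm A⁻¹) ∧
    (∀ B : Matrix (Fin n) (Fin n) ℝ, B.det = 0 →
      S ⟨n - 1, by omega⟩ ⟨n - 1, by omega⟩ ≤ matSpectralNorm (A - B)) ∧
    (∃ B : Matrix (Fin n) (Fin n) ℝ, B.det = 0 ∧
      matSpectralNorm (A - B) = S ⟨n - 1, by omega⟩ ⟨n - 1, by omega⟩) := by
  obtain ⟨hU, hV, hSoff, hSnn, hSmono, hAeq⟩ := hsvd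
  have hV' : V * Vᵀ = 1 := mul_eq_one_comm.mp hV
  have hVt : (Vᵀ)ᵀ * Vᵀ = 1 := by rwa [Matrix.transpose_transpose]
  have hU' : U * Uᵀ = 1 := mul_eq_one_comm.mp hU
  set k : Fin n := ⟨n - 1, by omega⟩ with hkdef
  set i0 : Fin n := ⟨0, hn⟩ with hi0def
  set d : Fin n → ℝ := fun i => S i i with hddef
  have hSdiag : S = Matrix.diagonal d := by
    ext i j
    by_cases h : i = j
    · subst h; simp [Matrix.diagonal_apply_eq, hddef]
    · rw [hSoff i j (fun hc => h (Fin.ext hc)), Matrix.diagonal_apply_ne _ h]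
  have hdnn : ∀ i, 0 ≤ d i := fun i => hSnn i i
  have hmono : ∀ i i' : Fin n, (i : ℕ) ≤ (i' : ℕ) → d i' ≤ d i :=
    fun i i' h => hSmono i i' i i' rfl rfl h
  have hdk_le : ∀ i, d k ≤ d i := fun i => hmono i k (by
    have := i.isLt; simp only [hkdef]; omega)
  have hd0 : ∀ i, d i ≤ d i0 := fun i => hmono i0 i (Nat.zero_le _)
  -- positivity of singular values
  have hdetA : A.det = U.det * (∏ i, d i) * Vᵀ.det := by
    rw [hAeq, hSdiag, Matrix.det_mul, Matrix.det_mul, Matrix.det_diagonal]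
  have hAne : A.det ≠ 0 := hA.ne_zero
  have hprod : (∏ i, d i) ≠ 0 := by
    intro h; rw [hdetA, h] at hAne; simp at hAne
  have hdne : ∀ i, d i ≠ 0 := fun i =>
    Finset.prod_ne_zero_iff.mp hprod i (Finset.mem_univ i)
  have hdkpos : 0 < d k := (hdnn k).lt_of_ne (Ne.symm (hdne k))
  have hd0pos : 0 < d i0 := lt_of_lt_of_le hdkpos (hdk_le i0)
  -- spectral norms of A and A⁻¹
  have hnA : matSpectralNorm A = d i0 := by
    rw [hAeq, hSdiag, spectralNorm_conj U _ V hU hV,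
      spectralNorm_diagonal hn d hdnn i0 hd0]
  have hAinv : A⁻¹ = V * Matrix.diagonal (fun i => (d i)⁻¹) * Uᵀ := by
    apply Matrix.inv_eq_right_inv
    rw [hAeq, hSdiag]
    simp only [Matrix.mul_assoc]
    rw [← Matrix.mul_assoc Vᵀ V, hV, Matrix.one_mul,
      ← Matrix.mul_assoc (Matrix.diagonal d), Matrix.diagonal_mul_diagonal]
    rw [show (fun i => d i * (d i)⁻¹) = fun _ : Fin n => (1 : ℝ) from
      funext fun i => mul_inv_cancel₀ (hdne i), Matrix.diagonal_one, Matrix.one_mul, hU']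
  have hnAinv : matSpectralNorm A⁻¹ = (d k)⁻¹ := by
    rw [hAinv, spectralNorm_conj V _ U hV hU]
    exact spectralNorm_diagonal hn _ (fun i => inv_nonneg.mpr (hdnn i)) k
      (fun i => inv_anti₀ hdkpos (hdk_le i))
  -- lower bound claim
  have lower : ∀ B : Matrix (Fin n) (Fin n) ℝ, B.det = 0 → d k ≤ matSpectralNorm (A - B) := by
    intro B hB
    obtain ⟨v, hv0, hBv⟩ := Matrix.exists_mulVec_eq_zero_iff.mpr hB
    have hvpos := rEnorm_pos hv0
    set u : Fin n → ℝ := (_root_.enorm v)⁻¹ • v with hudef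
    have hu : _root_.enorm u = 1 := by
      rw [hudef, enorm_smul', abs_of_pos (inv_pos.mpr hvpos), inv_mul_cancel₀ hvpos.ne']
    have hBu : B.mulVec u = 0 := by rw [hudef, Matrix.mulVec_smul, hBv, smul_zero]
    have h1 : (A - B).mulVec u = A.mulVec u := by rw [Matrix.sub_mulVec, hBu, sub_zero]
    have h2 : d k ≤ _root_.enorm (A.mulVec u) := by
      rw [hAeq, hSdiag]
      have hy : _root_.enorm (Vᵀ.mulVec u) = 1 := by rw [enorm_mulVec_orth hVt, hu]
      have hrw : (U * Matrix.diagonal d * Vᵀ).mulVec u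
          = U.mulVec ((Matrix.diagonal d).mulVec (Vᵀ.mulVec u)) := by
        rw [Matrix.mulVec_mulVec, Matrix.mulVec_mulVec, Matrix.mul_assoc]
      rw [hrw, enorm_mulVec_orth hU]
      set y := Vᵀ.mulVec u
      have hysum : ∑ i, y i ^ 2 = 1 := by
        have := enorm_sq y; rw [hy, one_pow] at this; exact this.symm
      rw [show d k = Real.sqrt (d k ^ 2) from (Real.sqrt_sq (hdnn k)).symm]
      unfold _root_.enorm
      apply Real.sqrt_le_sqrt
      calc d k ^ 2 = ∑ i, d k ^ 2 * y i ^ 2 := by rw [← Finset.mul_sum, hysum, mul_one]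
        _ ≤ ∑ i, (d i * y i) ^ 2 := Finset.sum_le_sum fun i _ => by
            rw [mul_pow]
            exact mul_le_mul_of_nonneg_right
              (pow_le_pow_left₀ (hdnn k) (hdk_le i) 2) (sq_nonneg _)
        _ = ∑ i, ((Matrix.diagonal d).mulVec y i) ^ 2 := by
            simp [Matrix.mulVec_diagonal]
    have h3 := le_spectralNorm (A - B) hu
    rw [h1] at h3
    exact h2.trans h3
  -- attaining matrix
  set B0 : Matrix (Fin n) (Fin n) ℝ :=
    U * Matrix.diagonal (fun i => if i = k then 0 else d i) * Vᵀ with hB0def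
  have hdetB0 : B0.det = 0 := by
    rw [hB0def, Matrix.det_mul, Matrix.det_mul, Matrix.det_diagonal,
      Finset.prod_eq_zero (Finset.mem_univ k) (by simp)]
    ring
  have hsub : A - B0 = U * Matrix.diagonal (fun i => if i = k then d k else 0) * Vᵀ := by
    have hfun : (fun i => d i - (if i = k then 0 else d i))
        = (fun i : Fin n => if i = k then d k else 0) := by
      funext i
      by_cases h : i = k
      · rw [if_pos h, if_pos h, sub_zero, h]
      · rw [if_neg h, if_neg h, sub_self]
    rw [hAeq, hSdiag, hB0def, ← Matrix.sub_mul, ← Matrix.mul_sub, Matrix.diagonal_sub, hfun]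
  have hnormB0 : matSpectralNorm (A - B0) = d k := by
    rw [hsub, spectralNorm_conj U _ V hU hV]
    have := spectralNorm_diagonal hn (fun i => if i = k then d k else 0)
      (fun i => by by_cases h : i = k <;> simp [h, hdnn k]) k
      (fun i => by by_cases h : i = k <;> simp [h, hdnn k])
    simpa using this
  refine ⟨?_, lower, ⟨B0, hdetB0, hnormB0⟩⟩
  -- the sInf computation
  have hmem : d k / matSpectralNorm A ∈ {r : ℝ | ∃ B : Matrix (Fin n) (Fin n) ℝ,
      B.det = 0 ∧ r = matSpectralNorm (A - B) / matSpectralNorm A} :=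
    ⟨B0, hdetB0, by rw [hnormB0]⟩
  have hApos : 0 < matSpectralNorm A := by rw [hnA]; exact hd0pos
  have hbound : ∀ r ∈ {r : ℝ | ∃ B : Matrix (Fin n) (Fin n) ℝ,
      B.det = 0 ∧ r = matSpectralNorm (A - B) / matSpectralNorm A}, d k / matSpectralNorm A ≤ r := by
    rintro r ⟨B, hB, rfl⟩
    exact div_le_div_of_nonneg_right (lower B hB) hApos.le
  rw [le_antisymm (csInf_le ⟨d k / matSpectralNorm A, hbound⟩ hmem) (le_csInf ⟨_, hmem⟩ hbound)]
  rw [hnA, hnAinv]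
  field_simp
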